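/- arXiv:2303.03867 — 11 statements merged into one kernel-verified Lean document; each statement's English description precedes it below -/
import Mathlib

section
/- Let K be a category, F : K ⥤ K an endofunctor admitting a right adjoint R, O an object of K, and J a (small) category. If K has all colimits of shape J, then the category F-Mly of F-Mealy machines with output O has all colimits of shape J, and the forgetful functor F-Mly → K sending (E,d,s) to E creates colimits of shape J (so colimits are computed as in K on carriers). -/
open CategoryTheory Limits

universe w w' v u

/-- An `F`-Mealy machine with output `O`: a carrier `E` with maps `d : F E ⟶ E`
and `s : F E ⟶ O`. -/
structure FMealy {K : Type u} [Category.{v} K] (F : K ⥤ K) (O : K) : Type max u v where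
  E : K
  d : F.obj E ⟶ E
  s : F.obj E ⟶ O

namespace FMealy

variable {K : Type u} [Category.{v} K] {F : K ⥤ K} {O : K}

/-- A morphism of `F`-Mealy machines. -/
@[ext]
structure Hom (M N : FMealy F O) : Type v where
  f : M.E ⟶ N.E
  hd : M.d ≫ f = F.map f ≫ N.d
  hs : M.s = F.map f ≫ N.s

instance : Category (FMealy F O) where
  Hom := Hom
  id M := ⟨𝟙 M.E, by simp, by simp⟩
  comp u v := ⟨u.f ≫ v.f, by
      rw [F.map_comp, Category.assoc, ← v.hd, ← Category.assoc, u.hd, Category.assoc], by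
      rw [F.map_comp, Category.assoc, ← v.hs, u.hs]⟩
  id_comp u := Hom.ext (Category.id_comp u.f)
  comp_id u := Hom.ext (Category.comp_id u.f)
  assoc u v w := Hom.ext (Category.assoc u.f v.f w.f)

/-- The forgetful functor sending a machine `(E, d, s)` to its carrier `E`. -/
def forget (F : K ⥤ K) (O : K) : FMealy F O ⥤ K where
  obj M := M.E
  map u := u.f

end FMealy


section Aux

open FMealy

variable {K : Type u} [Category.{v} K] {F : K ⥤ K} {O : K}

instance fMealyForget_reflectsIsos : (FMealy.forget F O).ReflectsIsomorphisms where
  reflects {M N} u h := by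
    haveI : IsIso ((FMealy.forget F O).map u) := h
    let g : N.E ⟶ M.E := @inv K _ M.E N.E u.f this
    have hg1 : u.f ≫ g = 𝟙 M.E := IsIso.hom_inv_id ((FMealy.forget F O).map u)
    have hg2 : g ≫ u.f = 𝟙 N.E := IsIso.inv_hom_id ((FMealy.forget F O).map u)
    refine ⟨⟨⟨g, ?_, ?_⟩, ?_, ?_⟩⟩
    · calc N.d ≫ g = ((F.map g ≫ F.map u.f) ≫ N.d) ≫ g := by
            rw [← F.map_comp, hg2, F.map_id, Category.id_comp]
        _ = F.map g ≫ (M.d ≫ u.f) ≫ g := by rw [u.hd]; simp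
        _ = F.map g ≫ M.d := by rw [Category.assoc, hg1, Category.comp_id]
    · calc N.s = (F.map g ≫ F.map u.f) ≫ N.s := by
            rw [← F.map_comp, hg2, F.map_id, Category.id_comp]
        _ = F.map g ≫ M.s := by rw [Category.assoc, ← u.hs]
    · exact FMealy.Hom.ext (by exact hg1)
    · exact FMealy.Hom.ext (by exact hg2)

variable {J : Type w} [Category.{w'} J]

/-- The cocone used to define the structure map `d` on the colimit carrier. -/
@[simps]
def dCocone (D : J ⥤ FMealy F O) (c : Cocone (D ⋙ FMealy.forget F O)) :
    Cocone ((D ⋙ FMealy.forget F O) ⋙ F) where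
  pt := c.pt
  ι :=
    { app := fun j => (D.obj j).d ≫ c.ι.app j
      naturality := fun j j' f => by
        have hd := (D.map f).hd
        have hw : (D.map f).f ≫ c.ι.app j' = c.ι.app j := c.w f
        show F.map (D.map f).f ≫ (D.obj j').d ≫ c.ι.app j' = ((D.obj j).d ≫ c.ι.app j) ≫ 𝟙 c.pt
        erw [← Category.assoc, ← hd, Category.assoc, hw]
        exact (Category.comp_id _).symm }

/-- The cocone used to define the output map `s` on the colimit carrier. -/
@[simps]
def sCocone (D : J ⥤ FMealy F O) :
    Cocone ((D ⋙ FMealy.forget F O) ⋙ F) where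
  pt := O
  ι :=
    { app := fun j => (D.obj j).s
      naturality := fun j j' f => by
        show F.map (D.map f).f ≫ (D.obj j').s = (D.obj j).s ≫ 𝟙 O
        rw [← (D.map f).hs]
        exact (Category.comp_id _).symm }

noncomputable def liftMachineColimit (R : K ⥤ K) (adj : F ⊣ R) (D : J ⥤ FMealy F O)
    (c : Cocone (D ⋙ FMealy.forget F O)) (t : IsColimit c) :
    LiftsToColimit D (FMealy.forget F O) c t := by
  have hP : PreservesColimitsOfSize.{w', w} F := adj.leftAdjoint_preservesColimits
  have hF : IsColimit (F.mapCocone c) := isColimitOfPreserves F t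
  have hmap : ∀ j, (F.mapCocone c).ι.app j = F.map (c.ι.app j) := fun j => rfl
  let M : FMealy F O := ⟨c.pt, hF.desc (dCocone D c), hF.desc (sCocone D)⟩
  have hd : ∀ j, F.map (c.ι.app j) ≫ M.d = (D.obj j).d ≫ c.ι.app j := fun j =>
    hF.fac (dCocone D c) j
  have hs : ∀ j, F.map (c.ι.app j) ≫ M.s = (D.obj j).s := fun j => hF.fac (sCocone D) j
  let lc : Cocone D :=
    { pt := M
      ι :=
        { app := fun j => ⟨c.ι.app j, (hd j).symm, (hs j).symm⟩
          naturality := fun j j' f => FMealy.Hom.ext (by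
            have hw : (D.map f).f ≫ c.ι.app j' = c.ι.app j := c.w f
            show (D.map f).f ≫ c.ι.app j' = c.ι.app j ≫ 𝟙 c.pt
            rw [hw]
            exact (Category.comp_id _).symm) } }
  refine ⟨⟨lc, Cocones.ext (Iso.refl _) (fun j => Category.comp_id _)⟩, ?_⟩
  refine
    { desc := fun m => ⟨t.desc ((FMealy.forget F O).mapCocone m), ?_, ?_⟩
      fac := fun m j => FMealy.Hom.ext (t.fac ((FMealy.forget F O).mapCocone m) j)
      uniq := fun m u hu => FMealy.Hom.ext (t.uniq ((FMealy.forget F O).mapCocone m) u.f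
        (fun j => congrArg FMealy.Hom.f (hu j))) }
  · refine hF.hom_ext fun j => ?_
    have hfac : c.ι.app j ≫ t.desc ((FMealy.forget F O).mapCocone m) = (m.ι.app j).f :=
      t.fac ((FMealy.forget F O).mapCocone m) j
    erw [hmap, ← Category.assoc, hd j, Category.assoc, hfac, (m.ι.app j).hd,
      ← Category.assoc, ← F.map_comp, hfac]
    rfl
  · refine hF.hom_ext fun j => ?_
    have hfac : c.ι.app j ≫ t.desc ((FMealy.forget F O).mapCocone m) = (m.ι.app j).f :=
      t.fac ((FMealy.forget F O).mapCocone m) j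
    erw [hmap, hs j, (m.ι.app j).hs, ← Category.assoc, ← F.map_comp, hfac]
    rfl

end Aux

/-- If `F : K ⥤ K` has a right adjoint `R` and `K` has colimits of shape `J`, then the
category of `F`-Mealy machines with output `O` has colimits of shape `J`, and the
forgetful functor to `K` creates them. -/
theorem fMealy_hasColimitsOfShape_and_forget_createsColimits
    {K : Type u} [Category.{v} K] (F : K ⥤ K) (R : K ⥤ K) (adj : F ⊣ R) (O : K)
    (J : Type w) [Category.{w'} J] [HasColimitsOfShape J K] :
    HasColimitsOfShape J (FMealy F O) ∧
      Nonempty (CreatesColimitsOfShape J (FMealy.forget F O)) := by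
  have : CreatesColimitsOfShape J (FMealy.forget F O) :=
    { CreatesColimit := fun {D} =>
        createsColimitOfReflectsIso fun c t => liftMachineColimit R adj D c t }
  exact ⟨hasColimitsOfShape_of_hasColimitsOfShape_createsColimitsOfShape (FMealy.forget F O), ⟨this⟩⟩
end

section
/- Let K be a category, F : K ⥤ K an endofunctor admitting a right adjoint R, O an object of K, and J a (small) category. If K has all colimits of shape J, then the category F-Mre of F-Moore machines with output O has all colimits of shape J, and the forgetful functor F-Mre → K sending (E,d,s) to E creates colimits of shape J (so colimits are computed as in K on carriers). -/
open CategoryTheory Limits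

universe w w' v u

/-- An `F`-Moore machine with output `O`: a carrier `E` with maps `d : F E ⟶ E`
and `s : E ⟶ O`. -/
structure FMoore {K : Type u} [Category.{v} K] (F : K ⥤ K) (O : K) : Type max u v where
  E : K
  d : F.obj E ⟶ E
  s : E ⟶ O

namespace FMoore

variable {K : Type u} [Category.{v} K] {F : K ⥤ K} {O : K}

/-- A morphism of `F`-Moore machines. -/
@[ext]
structure Hom (M N : FMoore F O) : Type v where
  f : M.E ⟶ N.E
  hd : M.d ≫ f = F.map f ≫ N.d
  hs : M.s = f ≫ N.s

instance : Category (FMoore F O) where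
  Hom := Hom
  id M := ⟨𝟙 M.E, by simp, by simp⟩
  comp u v := ⟨u.f ≫ v.f, by
      rw [F.map_comp, Category.assoc, ← v.hd, ← Category.assoc, u.hd, Category.assoc], by
      rw [Category.assoc, ← v.hs, u.hs]⟩
  id_comp u := Hom.ext (Category.id_comp u.f)
  comp_id u := Hom.ext (Category.comp_id u.f)
  assoc u v w := Hom.ext (Category.assoc u.f v.f w.f)

/-- The forgetful functor sending a machine `(E, d, s)` to its carrier `E`. -/
def forget (F : K ⥤ K) (O : K) : FMoore F O ⥤ K where
  obj M := M.E
  map u := u.f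

end FMoore


namespace FMoore

variable {K : Type u} [Category.{v} K] {F : K ⥤ K} {O : K}

instance forget_reflectsIsos : (FMoore.forget F O).ReflectsIsomorphisms := by
  constructor
  intro M N u hu
  haveI : IsIso u.f := hu
  refine ⟨⟨⟨inv u.f, ?_, ?_⟩, ?_, ?_⟩⟩
  · rw [← cancel_epi (F.map u.f), ← Category.assoc, ← u.hd, Category.assoc,
      IsIso.hom_inv_id, Category.comp_id, ← Category.assoc, ← F.map_comp,
      IsIso.hom_inv_id, F.map_id, Category.id_comp]
  · rw [u.hs, ← Category.assoc, IsIso.inv_hom_id, Category.id_comp]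
  · exact Hom.ext (show u.f ≫ inv u.f = 𝟙 M.E by simp)
  · exact Hom.ext (show inv u.f ≫ u.f = 𝟙 N.E by simp)

variable {R : K ⥤ K} {J : Type w} [Category.{w'} J]

/-- Lift a colimit cocone of carriers to a colimit cocone of Moore machines. -/
noncomputable def liftsToColimitAux (adj : F ⊣ R) (D : J ⥤ FMoore F O)
    (c : Cocone (D ⋙ FMoore.forget F O)) (t : IsColimit c) :
    LiftsToColimit D (FMoore.forget F O) c t := by
  haveI := adj.leftAdjoint_preservesColimits
  let tF : IsColimit (F.mapCocone c) := isColimitOfPreserves F t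
  have hw : ∀ {j j' : J} (φ : j ⟶ j'), (D.map φ).f ≫ c.ι.app j' = c.ι.app j := by
    intro j j' φ
    have := c.w φ
    dsimp [forget] at this
    exact this
  let dCocone : Cocone ((D ⋙ FMoore.forget F O) ⋙ F) :=
    { pt := c.pt
      ι := { app := fun j => (D.obj j).d ≫ c.ι.app j
             naturality := fun j j' φ => by
               have hd := (D.map φ).hd
               dsimp [forget]
               rw [Category.comp_id, ← Category.assoc, ← hd, Category.assoc, hw φ] } }
  let sCocone : Cocone (D ⋙ FMoore.forget F O) :=
    { pt := O
      ι := { app := fun j => (D.obj j).s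
             naturality := fun j j' φ => by
               have hs := (D.map φ).hs
               dsimp [forget]
               rw [Category.comp_id, ← hs] } }
  let Cpt : FMoore F O := ⟨c.pt, tF.desc dCocone, t.desc sCocone⟩
  have hfac : ∀ j, F.map (c.ι.app j) ≫ Cpt.d = (D.obj j).d ≫ c.ι.app j := fun j =>
    tF.fac dCocone j
  let lifted : Cocone D :=
    { pt := Cpt
      ι := { app := fun j => ⟨c.ι.app j, (hfac j).symm, (t.fac sCocone j).symm⟩
             naturality := fun j j' φ => Hom.ext (show (D.map φ).f ≫ c.ι.app j' =
               c.ι.app j ≫ 𝟙 c.pt by simpa using hw φ) } }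
  refine ⟨⟨lifted, Cocones.ext (Iso.refl _) (fun j => by simp [forget, lifted])⟩, ?_⟩
  refine { desc := fun u => ⟨t.desc ((FMoore.forget F O).mapCocone u), ?_, ?_⟩
           fac := fun u j => Hom.ext (t.fac ((FMoore.forget F O).mapCocone u) j)
           uniq := fun u m hm => Hom.ext (t.uniq ((FMoore.forget F O).mapCocone u) m.f
             (fun j => congrArg Hom.f (hm j))) }
  · -- d compatibility
    apply tF.hom_ext
    intro j
    have h2 : c.ι.app j ≫ t.desc ((FMoore.forget F O).mapCocone u) = (u.ι.app j).f :=
      t.fac _ j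
    have h3 := (u.ι.app j).hd
    dsimp only [Functor.const_obj_obj] at h3
    show F.map (c.ι.app j) ≫ Cpt.d ≫ _ = F.map (c.ι.app j) ≫ _ ≫ u.pt.d
    erw [← Category.assoc, hfac j, Category.assoc, h2, h3, ← Category.assoc,
      ← F.map_comp, ← h2, F.map_comp, Category.assoc]
  · -- s compatibility
    apply t.hom_ext
    intro j
    have h2 : c.ι.app j ≫ t.desc ((FMoore.forget F O).mapCocone u) = (u.ι.app j).f :=
      t.fac _ j
    have hs := (u.ι.app j).hs
    dsimp only [Functor.const_obj_obj] at hs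
    show c.ι.app j ≫ Cpt.s = c.ι.app j ≫ _ ≫ u.pt.s
    erw [← Category.assoc, h2, ← hs]
    exact t.fac sCocone j

end FMoore

/-- If `F : K ⥤ K` has a right adjoint `R` and `K` has colimits of shape `J`, then the
category of `F`-Moore machines with output `O` has colimits of shape `J`, and the
forgetful functor to `K` creates them. -/
theorem fMoore_hasColimitsOfShape_and_forget_createsColimits
    {K : Type u} [Category.{v} K] (F : K ⥤ K) (R : K ⥤ K) (adj : F ⊣ R) (O : K)
    (J : Type w) [Category.{w'} J] [HasColimitsOfShape J K] :
    HasColimitsOfShape J (FMoore F O) ∧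
      Nonempty (CreatesColimitsOfShape J (FMoore.forget F O)) := by
  
  haveI : ∀ (D : J ⥤ FMoore F O), CreatesColimit D (FMoore.forget F O) := fun D =>
    createsColimitOfReflectsIso (fun c t => FMoore.liftsToColimitAux adj D c t)
  haveI : HasColimitsOfShape J (FMoore F O) :=
    ⟨fun D => hasColimit_of_created D (FMoore.forget F O)⟩
  exact ⟨inferInstance, ⟨⟨fun {D} => inferInstance⟩⟩⟩
end

section
/- Let K be a category, F : K ⥤ K an endofunctor admitting a right adjoint R, O an object of K, and J a (small) connected category. If K has all limits of shape J, then the category F-Mly of F-Mealy machines with output O has all limits of shape J, and the forgetful functor F-Mly → K sending (E,d,s) to E creates limits of shape J (so connected limits, in particular equalizers, are computed as in K on carriers). -/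
open CategoryTheory Limits

universe w w' v u

namespace FMealyAux

open FMealy

variable {K : Type u} [Category.{v} K] {F R : K ⥤ K} {O : K}
variable {J : Type w} [Category.{w'} J]

instance : (FMealy.forget F O).ReflectsIsomorphisms := by
  constructor
  intro M N u hu
  haveI : IsIso u.f := hu
  refine ⟨⟨⟨inv u.f, ?_, ?_⟩, ?_, ?_⟩⟩
  · have h := u.hd
    rw [← cancel_mono u.f, Category.assoc, Category.assoc, IsIso.inv_hom_id,
      Category.comp_id, ← cancel_epi (F.map u.f), ← Category.assoc, ← h,
      ← Category.assoc, ← F.map_comp, IsIso.hom_inv_id, F.map_id, Category.id_comp]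
  · rw [u.hs, ← Category.assoc, ← F.map_comp, IsIso.inv_hom_id, F.map_id, Category.id_comp]
  · exact Hom.ext (IsIso.hom_inv_id u.f)
  · exact Hom.ext (IsIso.inv_hom_id u.f)

/-- The transposed structure maps form a cone over `(D ⋙ forget) ⋙ R`. -/
noncomputable def dCone (adj : F ⊣ R) (D : J ⥤ FMealy F O)
    (c : Cone (D ⋙ FMealy.forget F O)) : Cone ((D ⋙ FMealy.forget F O) ⋙ R) where
  pt := c.pt
  π :=
    { app := fun j => c.π.app j ≫ adj.homEquiv _ _ (D.obj j).d
      naturality := by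
        intro j k u
        have hw := c.w u
        dsimp [FMealy.forget] at hw ⊢
        erw [Category.id_comp, Category.assoc, ← Adjunction.homEquiv_naturality_right,
          (D.map u).hd, Adjunction.homEquiv_naturality_left, reassoc_of% hw]
        rfl }

/-- The lifted `d` structure map on the limit carrier. -/
noncomputable def dLift [PreservesLimitsOfShape J R] (adj : F ⊣ R) (D : J ⥤ FMealy F O)
    {c : Cone (D ⋙ FMealy.forget F O)} (hc : IsLimit c) : F.obj c.pt ⟶ c.pt :=
  (adj.homEquiv _ _).symm ((isLimitOfPreserves R hc).lift (dCone adj D c))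

lemma dLift_w [PreservesLimitsOfShape J R] (adj : F ⊣ R) (D : J ⥤ FMealy F O)
    {c : Cone (D ⋙ FMealy.forget F O)} (hc : IsLimit c) (j : J) :
    dLift adj D hc ≫ c.π.app j = F.map (c.π.app j) ≫ (D.obj j).d := by
  have h : (isLimitOfPreserves R hc).lift (dCone adj D c) ≫ R.map (c.π.app j)
      = c.π.app j ≫ adj.homEquiv _ _ (D.obj j).d :=
    (isLimitOfPreserves R hc).fac (dCone adj D c) j
  erw [dLift, ← Adjunction.homEquiv_naturality_right_symm, h,
    Adjunction.homEquiv_naturality_left_symm]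
  exact congrArg (fun t => F.map (c.π.app j) ≫ t)
    ((adj.homEquiv _ _).symm_apply_apply (D.obj j).d)

/-- The lifted `s` structure map on the limit carrier. -/
noncomputable def sLift [IsConnected J] (D : J ⥤ FMealy F O)
    (c : Cone (D ⋙ FMealy.forget F O)) : F.obj c.pt ⟶ O :=
  F.map (c.π.app (Classical.arbitrary J)) ≫ (D.obj (Classical.arbitrary J)).s

lemma sLift_w [IsConnected J] (adj : F ⊣ R) (D : J ⥤ FMealy F O)
    (c : Cone (D ⋙ FMealy.forget F O)) (j : J) :
    sLift D c = F.map (c.π.app j) ≫ (D.obj j).s := by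
  have key : ∀ j : J, F.map (c.π.app j) ≫ (D.obj j).s
      = (adj.homEquiv _ _).symm (c.π.app j ≫ adj.homEquiv _ _ (D.obj j).s) := by
    intro j
    erw [Adjunction.homEquiv_naturality_left_symm, Equiv.symm_apply_apply]
  have const : ∀ j₁ j₂ : J,
      (c.π.app j₁ ≫ adj.homEquiv _ _ (D.obj j₁).s : c.pt ⟶ R.obj O)
        = c.π.app j₂ ≫ adj.homEquiv _ _ (D.obj j₂).s := by
    refine constant_of_preserves_morphisms _ ?_
    intro j₁ j₂ u
    have hw := c.w u
    dsimp [FMealy.forget] at hw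
    erw [(D.map u).hs, Adjunction.homEquiv_naturality_left, ← Category.assoc, hw]
    rfl
  rw [sLift, key, key, const (Classical.arbitrary J) j]
  rfl

/-- The lifted cone over `D`. -/
noncomputable def coneLift [IsConnected J] [PreservesLimitsOfShape J R]
    (adj : F ⊣ R) (D : J ⥤ FMealy F O)
    {c : Cone (D ⋙ FMealy.forget F O)} (hc : IsLimit c) : Cone D where
  pt := ⟨c.pt, dLift adj D hc, sLift D c⟩
  π :=
    { app := fun j => ⟨c.π.app j, dLift_w adj D hc j, sLift_w adj D c j⟩
      naturality := by
        intro j k u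
        apply Hom.ext
        have hw := c.w u
        dsimp [FMealy.forget] at hw
        show 𝟙 c.pt ≫ c.π.app k = c.π.app j ≫ (D.map u).f
        erw [Category.id_comp, hw] }

/-- The lifted cone is a limit. -/
noncomputable def coneLiftIsLimit [IsConnected J] [PreservesLimitsOfShape J R]
    (adj : F ⊣ R) (D : J ⥤ FMealy F O)
    {c : Cone (D ⋙ FMealy.forget F O)} (hc : IsLimit c) :
    IsLimit (coneLift adj D hc) where
  lift s :=
    { f := hc.lift ((FMealy.forget F O).mapCone s)
      hd := by
        apply hc.hom_ext
        intro j
        have hf : hc.lift ((FMealy.forget F O).mapCone s) ≫ c.π.app j = (s.π.app j).f :=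
          hc.fac ((FMealy.forget F O).mapCone s) j
        have hcw : dLift adj D hc ≫ c.π.app j = F.map (c.π.app j) ≫ (D.obj j).d :=
          dLift_w adj D hc j
        have hsj : s.pt.d ≫ (s.π.app j).f = F.map (s.π.app j).f ≫ (D.obj j).d :=
          (s.π.app j).hd
        show (s.pt.d ≫ hc.lift ((FMealy.forget F O).mapCone s)) ≫ c.π.app j
          = (F.map (hc.lift ((FMealy.forget F O).mapCone s)) ≫ dLift adj D hc) ≫ c.π.app j
        erw [Category.assoc, Category.assoc, hcw, ← Functor.map_comp_assoc, hf, hsj]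
        rfl
      hs := by
        have hf : hc.lift ((FMealy.forget F O).mapCone s) ≫ c.π.app (Classical.arbitrary J)
            = (s.π.app (Classical.arbitrary J)).f :=
          hc.fac ((FMealy.forget F O).mapCone s) (Classical.arbitrary J)
        show s.pt.s = F.map (hc.lift ((FMealy.forget F O).mapCone s)) ≫ sLift D c
        erw [sLift_w adj D c (Classical.arbitrary J), ← Functor.map_comp_assoc, hf]
        exact (s.π.app (Classical.arbitrary J)).hs }
  fac s j := Hom.ext (hc.fac ((FMealy.forget F O).mapCone s) j)
  uniq s m hm := by
    apply Hom.ext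
    apply hc.uniq ((FMealy.forget F O).mapCone s)
    intro j
    exact congrArg Hom.f (hm j)

noncomputable def createsShape [IsConnected J] [PreservesLimitsOfShape J R]
    (adj : F ⊣ R) : CreatesLimitsOfShape J (FMealy.forget F O) where
  CreatesLimit := fun {D} =>
    createsLimitOfReflectsIso fun c hc =>
      { liftedCone := coneLift adj D hc
        validLift := Cones.ext (Iso.refl _) (by
          intro j
          dsimp [coneLift, FMealy.forget]
          simp)
        makesLimit := coneLiftIsLimit adj D hc }

end FMealyAux

/-- If `F : K ⥤ K` has a right adjoint `R`, `J` is a connected category, and `K` has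
limits of shape `J`, then the category of `F`-Mealy machines with output `O` has limits
of shape `J`, and the forgetful functor to `K` creates them. -/
theorem fMealy_hasConnectedLimitsOfShape_and_forget_createsLimits
    {K : Type u} [Category.{v} K] (F : K ⥤ K) (R : K ⥤ K) (adj : F ⊣ R) (O : K)
    (J : Type w) [Category.{w'} J] [IsConnected J] [HasLimitsOfShape J K] :
    HasLimitsOfShape J (FMealy F O) ∧
      Nonempty (CreatesLimitsOfShape J (FMealy.forget F O)) := by
  letI : PreservesLimitsOfShape J R :=
    (Adjunction.rightAdjoint_preservesLimits.{w', w} adj).preservesLimitsOfShape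
  letI : CreatesLimitsOfShape J (FMealy.forget F O) := FMealyAux.createsShape adj
  exact ⟨hasLimitsOfShape_of_hasLimitsOfShape_createsLimitsOfShape (FMealy.forget F O),
    ⟨inferInstance⟩⟩
end

section
/- Let K be a category, F : K ⥤ K an endofunctor admitting a right adjoint R, O an object of K, and J a (small) connected category. If K has all limits of shape J, then the category F-Mre of F-Moore machines with output O has all limits of shape J, and the forgetful functor F-Mre → K sending (E,d,s) to E creates limits of shape J (so connected limits, in particular equalizers, are computed as in K on carriers). -/
open CategoryTheory Limits

universe w w' v u

section Aux

namespace FMoore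

variable {K : Type u} [Category.{v} K] {F : K ⥤ K} {O : K}

@[simp] lemma comp_f {M N P : FMoore F O} (u : M ⟶ N) (v : N ⟶ P) :
    (u ≫ v).f = u.f ≫ v.f := rfl

@[simp] lemma id_f (M : FMoore F O) : (𝟙 M : M ⟶ M).f = 𝟙 M.E := rfl

instance : (forget F O).ReflectsIsomorphisms := by
  constructor
  intro M N u hu
  let g : N.E ⟶ M.E := @inv _ _ _ _ ((forget F O).map u) hu
  have hg : u.f ≫ g = 𝟙 M.E := @IsIso.hom_inv_id _ _ _ _ ((forget F O).map u) hu
  have hg' : g ≫ u.f = 𝟙 N.E := @IsIso.inv_hom_id _ _ _ _ ((forget F O).map u) hu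
  refine ⟨⟨⟨g, ?_, ?_⟩, ?_, ?_⟩⟩
  · calc N.d ≫ g = (F.map g ≫ F.map u.f) ≫ N.d ≫ g := by
          rw [← F.map_comp, hg', F.map_id, Category.id_comp]
      _ = F.map g ≫ (F.map u.f ≫ N.d) ≫ g := by simp only [Category.assoc]
      _ = F.map g ≫ (M.d ≫ u.f) ≫ g := by rw [u.hd]
      _ = F.map g ≫ M.d := by rw [Category.assoc, hg, Category.comp_id]
  · rw [u.hs, ← Category.assoc, hg', Category.id_comp]
  · exact Hom.ext hg
  · exact Hom.ext hg'

variable (J : Type w) [Category.{w'} J] [IsConnected J] [HasLimitsOfShape J K]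

variable {J} in
noncomputable def liftedCone (G : J ⥤ FMoore F O) (c : Cone (G ⋙ forget F O))
    (t : IsLimit c) : Cone G where
  pt :=
    { E := c.pt
      d := t.lift
        { pt := F.obj c.pt
          π :=
            { app := fun j => F.map (c.π.app j) ≫ (G.obj j).d
              naturality := fun j j' u => by
                dsimp
                rw [Category.id_comp]
                have hw : c.π.app j ≫ (G.map u).f = c.π.app j' := c.w u
                show F.map (c.π.app j') ≫ (G.obj j').d
                    = (F.map (c.π.app j) ≫ (G.obj j).d) ≫ (G.map u).f
                erw [Category.assoc, (G.map u).hd, ← Category.assoc, ← F.map_comp, hw]; rfl } }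
      s := c.π.app (Classical.arbitrary J) ≫ (G.obj (Classical.arbitrary J)).s }
  π :=
    { app := fun j =>
        { f := c.π.app j
          hd := t.fac _ j
          hs := by
            have key : ∀ j : J, c.π.app j ≫ (G.obj j).s
                = c.π.app (Classical.arbitrary J) ≫ (G.obj (Classical.arbitrary J)).s := by
              intro j
              refine constant_of_preserves_morphisms
                (fun j => c.π.app j ≫ (G.obj j).s) (fun j j' u => ?_) _ _
              have hw : c.π.app j ≫ (G.map u).f = c.π.app j' := c.w u
              show c.π.app j ≫ (G.obj j).s = c.π.app j' ≫ (G.obj j').s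
              erw [(G.map u).hs, ← Category.assoc, hw]; rfl
            exact (key j).symm }
      naturality := fun j j' u => by
        apply Hom.ext
        dsimp
        erw [Category.id_comp]
        exact (c.w u).symm }

variable {J} in
noncomputable def liftedConeIsLimit (G : J ⥤ FMoore F O) (c : Cone (G ⋙ forget F O))
    (t : IsLimit c) : IsLimit (liftedCone G c t) where
  lift m :=
    { f := t.lift ((forget F O).mapCone m)
      hd := by
        apply t.hom_ext
        intro j
        dsimp [liftedCone]
        erw [Category.assoc, Category.assoc, t.fac, t.fac]
        have : t.lift ((forget F O).mapCone m) ≫ c.π.app j = (m.π.app j).f :=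
          t.fac ((forget F O).mapCone m) j
        dsimp only; erw [← Category.assoc, ← F.map_comp, this]
        exact (m.π.app j).hd
      hs := by
        dsimp [liftedCone]
        erw [← Category.assoc, t.fac ((forget F O).mapCone m)]
        exact (m.π.app (Classical.arbitrary J)).hs }
  fac m j := Hom.ext (t.fac ((forget F O).mapCone m) j)
  uniq m u hu := by
    apply Hom.ext
    refine t.uniq ((forget F O).mapCone m) u.f (fun j => ?_)
    have := congrArg Hom.f (hu j)
    exact this

noncomputable instance createsLimitsOfShapeForget :
    CreatesLimitsOfShape J (forget F O) where
  CreatesLimit {G} := createsLimitOfReflectsIso fun c t =>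
    { liftedCone := liftedCone G c t
      validLift := Cones.ext (Iso.refl _) (fun j => by simp [liftedCone, forget])
      makesLimit := liftedConeIsLimit G c t }

instance : HasLimitsOfShape J (FMoore F O) :=
  hasLimitsOfShape_of_hasLimitsOfShape_createsLimitsOfShape (forget F O)

end FMoore

end Aux

/-- If `F : K ⥤ K` has a right adjoint `R`, `J` is a connected category, and `K` has
limits of shape `J`, then the category of `F`-Moore machines with output `O` has limits
of shape `J`, and the forgetful functor to `K` creates them. -/
theorem fMoore_hasConnectedLimitsOfShape_and_forget_createsLimits
    {K : Type u} [Category.{v} K] (F : K ⥤ K) (R : K ⥤ K) (adj : F ⊣ R) (O : K)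
    (J : Type w) [Category.{w'} J] [IsConnected J] [HasLimitsOfShape J K] :
    HasLimitsOfShape J (FMoore F O) ∧
      Nonempty (CreatesLimitsOfShape J (FMoore.forget F O)) := by
  exact ⟨inferInstance, ⟨inferInstance⟩⟩
end

section
/- Let K be a category with countable products, F : K ⥤ K an endofunctor with a right adjoint R, and O an object of K. Then the category F-Mre of F-Moore machines with output O has a terminal object whose underlying carrier object is the countable product O_∞ = ∏_{n ≥ 0} Rⁿ(O) of the iterates of R applied to O. Explicitly, there is an F-Moore machine structure (O_∞, d_∞, s_∞) such that for every F-Moore machine (E,d,s) there is a unique morphism of F-Moore machines (E,d,s) → (O_∞, d_∞, s_∞). -/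
open CategoryTheory Limits

universe w w' v u

/-- The `n`-fold application of a functor `R` to an object `O`. -/
def iterObj {K : Type u} [Category.{v} K] (R : K ⥤ K) (O : K) : ℕ → K
  | 0 => O
  | n + 1 => R.obj (iterObj R O n)

/-- The canonical cone maps `E ⟶ Rⁿ O` of a Moore machine. -/
def mooreIter {K : Type u} [Category.{v} K] {F : K ⥤ K} {O : K}
    (R : K ⥤ K) (adj : F ⊣ R) (M : FMoore F O) : ∀ n : ℕ, M.E ⟶ iterObj R O n
  | 0 => M.s
  | n + 1 => adj.homEquiv _ _ (M.d ≫ mooreIter R adj M n)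

/-- If `K` has countable products and `F ⊣ R`, then the category of `F`-Moore machines
with output `O` has a terminal object whose carrier is `O_∞ = ∏_{n ≥ 0} Rⁿ O`. -/
theorem fMoore_isTerminal_prod_iter
    {K : Type u} [Category.{v} K] [HasCountableProducts K]
    (F : K ⥤ K) (R : K ⥤ K) (adj : F ⊣ R) (O : K) :
    ∃ (dInfty : F.obj (∏ᶜ fun n : ℕ => iterObj R O n) ⟶ ∏ᶜ fun n : ℕ => iterObj R O n)
      (sInfty : (∏ᶜ fun n : ℕ => iterObj R O n) ⟶ O),
      Nonempty (IsTerminal (FMoore.mk (∏ᶜ fun n : ℕ => iterObj R O n) dInfty sInfty)) := by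
  refine ⟨Pi.lift (fun n => F.map (Pi.π _ (n + 1)) ≫ adj.counit.app (iterObj R O n)),
    Pi.π _ 0, ⟨IsTerminal.ofUniqueHom (fun M => ?_) (fun M u => ?_)⟩⟩
  · refine ⟨Pi.lift (mooreIter R adj M), ?_, ?_⟩
    · apply Pi.hom_ext
      intro n
      simp only [Category.assoc, limit.lift_π, Fan.mk_π_app, ← F.map_comp_assoc]
      have : F.map (mooreIter R adj M (n + 1)) ≫ adj.counit.app (iterObj R O n) =
          (adj.homEquiv _ _).symm (mooreIter R adj M (n + 1)) := by
        exact (adj.homEquiv_counit _ _ _).symm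
      erw [← F.map_comp_assoc, Pi.lift_π, this, mooreIter, Equiv.symm_apply_apply]
    · exact (Pi.lift_π (mooreIter R adj M) 0).symm
  · apply FMoore.Hom.ext
    apply Pi.hom_ext
    intro n
    simp only [limit.lift_π, Fan.mk_π_app]
    induction n with
    | zero =>
        have := u.hs
        exact this.symm
    | succ n ih =>
        have h1 : F.map (u.f ≫ Pi.π (fun n : ℕ => iterObj R O n) (n + 1)) ≫
            adj.counit.app (iterObj R O n) =
            M.d ≫ u.f ≫ Pi.π (fun n : ℕ => iterObj R O n) n := by
          rw [← Category.assoc M.d, u.hd, Category.assoc, F.map_comp]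
          erw [Pi.lift_π]
          exact Category.assoc _ _ _
        rw [mooreIter, ← ih, ← h1]
        exact (adj.homEquiv _ _).symm_apply_eq.mp (adj.homEquiv_counit _ _ _)
end

section
/- Let K be a category with countable products, F : K ⥤ K an endofunctor with a right adjoint R, and O an object of K. Then the category F-Mly of F-Mealy machines with output O has a terminal object whose underlying carrier object is the countable product O_∞ = ∏_{n ≥ 1} Rⁿ(O) of the iterates of R applied to O. Explicitly, there is an F-Mealy machine structure (O_∞, d_∞, s_∞) such that for every F-Mealy machine (E,d,s) there is a unique morphism of F-Mealy machines (E,d,s) → (O_∞, d_∞, s_∞). -/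
open CategoryTheory Limits

universe w w' v u

/-- The behaviour maps of a machine: transpose of running `n` steps then outputting. -/
def beh {K : Type u} [Category.{v} K] {F R : K ⥤ K} (adj : F ⊣ R) {O : K}
    (M : FMealy F O) : (n : ℕ) → (M.E ⟶ iterObj R O (n + 1))
  | 0 => adj.homEquiv _ _ M.s
  | n + 1 => adj.homEquiv _ (iterObj R O (n + 1)) (M.d ≫ beh adj M n)

/-- If `K` has countable products and `F ⊣ R`, then the category of `F`-Mealy machines
with output `O` has a terminal object whose carrier is `O_∞ = ∏_{n ≥ 1} Rⁿ O`. -/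
theorem fMealy_isTerminal_prod_iter
    {K : Type u} [Category.{v} K] [HasCountableProducts K]
    (F : K ⥤ K) (R : K ⥤ K) (adj : F ⊣ R) (O : K) :
    ∃ (dInfty : F.obj (∏ᶜ fun n : ℕ => iterObj R O (n + 1)) ⟶ ∏ᶜ fun n : ℕ => iterObj R O (n + 1))
      (sInfty : F.obj (∏ᶜ fun n : ℕ => iterObj R O (n + 1)) ⟶ O),
      Nonempty (IsTerminal (FMealy.mk (∏ᶜ fun n : ℕ => iterObj R O (n + 1)) dInfty sInfty)) := by
  set P := ∏ᶜ fun n : ℕ => iterObj R O (n + 1) with hP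
  refine ⟨Pi.lift fun n =>
      (adj.homEquiv P (iterObj R O (n + 1))).symm (Pi.π (fun k : ℕ => iterObj R O (k + 1)) (n + 1)),
    (adj.homEquiv P O).symm (Pi.π (fun k : ℕ => iterObj R O (k + 1)) 0), ⟨?_⟩⟩
  refine IsTerminal.ofUniqueHom (fun M => ⟨Pi.lift (beh adj M), ?_, ?_⟩) ?_
  · apply Pi.hom_ext
    intro n
    rw [Category.assoc, limit.lift_π, Category.assoc, limit.lift_π]
    show M.d ≫ beh adj M n =
      F.map (Pi.lift (beh adj M)) ≫
        (adj.homEquiv P (iterObj R O (n + 1))).symm (Pi.π (fun k : ℕ => iterObj R O (k + 1)) (n + 1))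
    erw [← Adjunction.homEquiv_naturality_left_symm, limit.lift_π]
    show M.d ≫ beh adj M n = (adj.homEquiv _ _).symm (beh adj M (n + 1))
    rw [show beh adj M (n + 1) = adj.homEquiv _ (iterObj R O (n + 1)) (M.d ≫ beh adj M n) from rfl,
      Equiv.symm_apply_apply]
  · show M.s = F.map (Pi.lift (beh adj M)) ≫ (adj.homEquiv P O).symm _
    erw [← Adjunction.homEquiv_naturality_left_symm, limit.lift_π]
    show M.s = (adj.homEquiv _ _).symm (adj.homEquiv _ _ M.s)
    rw [Equiv.symm_apply_apply]
  · intro M m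
    apply FMealy.Hom.ext
    apply Pi.hom_ext
    intro n
    rw [limit.lift_π]
    induction n with
    | zero =>
      have := m.hs
      erw [show (FMealy.mk P _ _).s = (adj.homEquiv P O).symm
          (Pi.π (fun k : ℕ => iterObj R O (k + 1)) 0) from rfl,
        ← Adjunction.homEquiv_naturality_left_symm] at this
      show m.f ≫ Pi.π (fun k : ℕ => iterObj R O (k + 1)) 0 = adj.homEquiv _ _ M.s
      rw [this, Equiv.apply_symm_apply]; rfl
    | succ n ih =>
      have ih' : m.f ≫ Pi.π (fun k : ℕ => iterObj R O (k + 1)) n = beh adj M n := ih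
      have h := congrArg (fun g => g ≫ Pi.π (fun k : ℕ => iterObj R O (k + 1)) n) m.hd
      simp only [Category.assoc] at h
      have h2 : M.d ≫ m.f ≫ Pi.π (fun k : ℕ => iterObj R O (k + 1)) n =
          F.map m.f ≫ (adj.homEquiv P (iterObj R O (n + 1))).symm
            (Pi.π (fun k : ℕ => iterObj R O (k + 1)) (n + 1)) := by
        rw [h]; congr 1; exact limit.lift_π _ _
      erw [ih', ← Adjunction.homEquiv_naturality_left_symm] at h2
      show m.f ≫ Pi.π (fun k : ℕ => iterObj R O (k + 1)) (n + 1)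
        = adj.homEquiv _ (iterObj R O (n + 1)) (M.d ≫ beh adj M n)
      rw [h2, Equiv.apply_symm_apply]; rfl
end

section
/- Let K be a category with countable products and pullbacks, F : K ⥤ K an endofunctor with a right adjoint R, and O an object of K. Then the category F-Mly of F-Mealy machines with output O has binary products; moreover, the product of two machines (E, d_E, s_E) and (T, d_T, s_T) has as carrier the pullback P_∞ in K of the canonical comparison morphisms s̄_{E,∞} : E ⟶ O_∞ and s̄_{T,∞} : T ⟶ O_∞ into the terminal F-Mealy machine with carrier O_∞ = ∏_{n ≥ 1} Rⁿ(O). -/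
open CategoryTheory Limits

universe w w' v u

namespace FMealyAux

open FMealy

variable {K : Type u} [Category.{v} K] [HasCountableProducts K]
  {F R : K ⥤ K} (adj : F ⊣ R) (O : K)

/-- The dynamics of the terminal machine. -/
noncomputable def dInf :
    F.obj (∏ᶜ fun n : ℕ => iterObj R O (n + 1)) ⟶ ∏ᶜ fun n : ℕ => iterObj R O (n + 1) :=
  Pi.lift fun n => (adj.homEquiv _ (iterObj R O (n + 1))).symm (Pi.π _ (n + 1))

/-- The output of the terminal machine. -/
noncomputable def sInfM : F.obj (∏ᶜ fun n : ℕ => iterObj R O (n + 1)) ⟶ O :=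
  (adj.homEquiv _ O).symm (Pi.π _ 0)

/-- The terminal `F`-Mealy machine. -/
noncomputable def termM : FMealy F O :=
  ⟨∏ᶜ fun n : ℕ => iterObj R O (n + 1), dInf adj O, sInfM adj O⟩

variable {O}

/-- The transposed skip maps of a machine. -/
noncomputable def skip (M : FMealy F O) : ∀ n : ℕ, M.E ⟶ iterObj R O (n + 1)
  | 0 => adj.homEquiv _ O M.s
  | n + 1 => adj.homEquiv _ (iterObj R O (n + 1)) (M.d ≫ skip M n)

/-- The unique morphism into the terminal machine. -/
noncomputable def toTerm (M : FMealy F O) : M ⟶ termM adj O where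
  f := Pi.lift (skip adj M)
  hd := by
    show M.d ≫ Pi.lift (skip adj M) = F.map (Pi.lift (skip adj M)) ≫ dInf adj O
    apply limit.hom_ext
    rintro ⟨n⟩
    simp only [Category.assoc, dInf, limit.lift_π, Fan.mk_π_app]
    rw [← Adjunction.homEquiv_naturality_left_symm (Y := iterObj R O (n + 1)) adj
      (Pi.lift (skip adj M) : M.E ⟶ ∏ᶜ fun n : ℕ => iterObj R O (n + 1))
      (Pi.π (fun n => iterObj R O (n + 1)) (n + 1))]
    erw [limit.lift_π]
    exact (Equiv.symm_apply_apply _ _).symm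
  hs := by
    show M.s = F.map (Pi.lift (skip adj M)) ≫ sInfM adj O
    simp only [sInfM]
    rw [← Adjunction.homEquiv_naturality_left_symm (Y := O) adj
      (Pi.lift (skip adj M) : M.E ⟶ ∏ᶜ fun n : ℕ => iterObj R O (n + 1))
      (Pi.π (fun n => iterObj R O (n + 1)) 0)]
    erw [limit.lift_π]
    exact (Equiv.symm_apply_apply _ _).symm

theorem toTerm_unique (M : FMealy F O) (u : M ⟶ termM adj O) : u = toTerm adj M := by
  have hd : M.d ≫ u.f = F.map u.f ≫ dInf adj O := u.hd
  have hs : M.s = F.map u.f ≫ sInfM adj O := u.hs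
  apply FMealy.Hom.ext
  apply limit.hom_ext
  rintro ⟨n⟩
  show u.f ≫ Pi.π (fun k : ℕ => iterObj R O (k + 1)) n
      = Pi.lift (skip adj M) ≫ Pi.π (fun k : ℕ => iterObj R O (k + 1)) n
  rw [limit.lift_π]
  show u.f ≫ Pi.π (fun k : ℕ => iterObj R O (k + 1)) n = skip adj M n
  induction n with
  | zero =>
    apply (adj.homEquiv M.E O).symm.injective
    erw [Adjunction.homEquiv_naturality_left_symm (Y := O) adj u.f
      (Pi.π (fun k : ℕ => iterObj R O (k + 1)) 0)]
    show F.map u.f ≫ sInfM adj O = _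
    rw [← hs]
    exact ((adj.homEquiv M.E O).symm_apply_apply M.s).symm
  | succ n ih =>
    apply (adj.homEquiv M.E (iterObj R O (n + 1))).symm.injective
    erw [Adjunction.homEquiv_naturality_left_symm (Y := iterObj R O (n + 1)) adj u.f
      (Pi.π (fun k : ℕ => iterObj R O (k + 1)) (n + 1))]
    have e : dInf adj O (F := F) ≫ Pi.π (fun k : ℕ => iterObj R O (k + 1)) n
        = (adj.homEquiv (termM adj O (F := F)).E (iterObj R O (n + 1))).symm
            (Pi.π (fun k : ℕ => iterObj R O (k + 1)) (n + 1)) := by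
      simp only [dInf, limit.lift_π, Fan.mk_π_app]; rfl
    erw [← e, ← Category.assoc, ← hd, Category.assoc, ih]
    exact (Equiv.symm_apply_apply _ _).symm

/-- The terminal machine is terminal. -/
noncomputable def termMIsTerminal : IsTerminal (termM adj O (F := F)) :=
  IsTerminal.ofUniqueHom (fun M => toTerm adj M) (fun M u => toTerm_unique adj M u)

section Products

variable [HasPullbacks K] {T : FMealy F O} (hT : IsTerminal T) (M N : FMealy F O)

omit [HasCountableProducts K] in
theorem carrier_cond :
    F.map (pullback.fst (hT.from M).f (hT.from N).f) ≫ M.d ≫ (hT.from M).f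
      = F.map (pullback.snd (hT.from M).f (hT.from N).f) ≫ N.d ≫ (hT.from N).f := by
  rw [(hT.from M).hd, (hT.from N).hd, ← Category.assoc, ← Category.assoc,
    ← F.map_comp, ← F.map_comp, pullback.condition]

/-- The product machine: its carrier is the pullback of the comparison maps. -/
noncomputable def prodM : FMealy F O where
  E := pullback (hT.from M).f (hT.from N).f
  d := pullback.lift (F.map (pullback.fst _ _) ≫ M.d) (F.map (pullback.snd _ _) ≫ N.d) (by
        rw [Category.assoc, Category.assoc]; exact carrier_cond hT M N)
  s := F.map (pullback.fst _ _) ≫ M.s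

omit [HasCountableProducts K] in
theorem prodM_s_eq :
    (prodM hT M N).s = F.map (pullback.snd (hT.from M).f (hT.from N).f) ≫ N.s := by
  show F.map (pullback.fst _ _) ≫ M.s = _
  rw [(hT.from M).hs, (hT.from N).hs, ← Category.assoc, ← Category.assoc,
    ← F.map_comp, ← F.map_comp, pullback.condition]

/-- The first projection. -/
noncomputable def prodFst : prodM hT M N ⟶ M where
  f := pullback.fst _ _
  hd := pullback.lift_fst _ _ _
  hs := rfl

/-- The second projection. -/
noncomputable def prodSnd : prodM hT M N ⟶ N where
  f := pullback.snd _ _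
  hd := pullback.lift_snd _ _ _
  hs := prodM_s_eq hT M N

omit [HasCountableProducts K] [HasPullbacks K] in
theorem cone_comm {Q : FMealy F O} (q₁ : Q ⟶ M) (q₂ : Q ⟶ N) :
    q₁.f ≫ (hT.from M).f = q₂.f ≫ (hT.from N).f := by
  have h1 : q₁ ≫ hT.from M = hT.from Q := hT.hom_ext _ _
  have h2 : q₂ ≫ hT.from N = hT.from Q := hT.hom_ext _ _
  exact congrArg FMealy.Hom.f (h1.trans h2.symm)

/-- The lift into the product machine. -/
noncomputable def prodLift {Q : FMealy F O} (q₁ : Q ⟶ M) (q₂ : Q ⟶ N) :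
    Q ⟶ prodM hT M N where
  f := pullback.lift q₁.f q₂.f (cone_comm hT M N q₁ q₂)
  hd := by
    apply pullback.hom_ext
    · erw [Category.assoc, Category.assoc, pullback.lift_fst]
      show Q.d ≫ q₁.f = F.map _ ≫ pullback.lift _ _ _ ≫ pullback.fst _ _
      erw [pullback.lift_fst, ← Category.assoc, ← F.map_comp, pullback.lift_fst, q₁.hd]
    · erw [Category.assoc, Category.assoc, pullback.lift_snd]
      show Q.d ≫ q₂.f = F.map _ ≫ pullback.lift _ _ _ ≫ pullback.snd _ _
      erw [pullback.lift_snd, ← Category.assoc, ← F.map_comp, pullback.lift_snd, q₂.hd]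
  hs := by
    show Q.s = F.map _ ≫ F.map (pullback.fst _ _) ≫ M.s
    rw [← Category.assoc, ← F.map_comp, pullback.lift_fst, q₁.hs]

/-- The product machine is a binary product. -/
noncomputable def prodIsLimit : IsLimit (BinaryFan.mk (prodFst hT M N) (prodSnd hT M N)) :=
  BinaryFan.isLimitMk
    (fun c => prodLift hT M N c.fst c.snd)
    (fun c => FMealy.Hom.ext (pullback.lift_fst _ _ _))
    (fun c => FMealy.Hom.ext (pullback.lift_snd _ _ _))
    (fun c m h1 h2 => by
      apply FMealy.Hom.ext
      apply pullback.hom_ext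
      · show m.f ≫ pullback.fst _ _
            = pullback.lift c.fst.f c.snd.f (cone_comm hT M N c.fst c.snd) ≫ pullback.fst _ _
        erw [pullback.lift_fst]
        exact congrArg FMealy.Hom.f h1
      · show m.f ≫ pullback.snd _ _
            = pullback.lift c.fst.f c.snd.f (cone_comm hT M N c.fst c.snd) ≫ pullback.snd _ _
        erw [pullback.lift_snd]
        exact congrArg FMealy.Hom.f h2)

end Products

end FMealyAux

/-- If `K` has countable products and pullbacks and `F ⊣ R`, then the category of
`F`-Mealy machines with output `O` has binary products; moreover the product of two
machines `M`, `N` has as carrier the pullback in `K` of the underlying maps of the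
unique machine morphisms from `M` and `N` into the terminal machine, whose carrier is
`O_∞ = ∏_{n ≥ 1} Rⁿ O`. -/
theorem fMealy_binary_products_via_pullback
    {K : Type u} [Category.{v} K] [HasCountableProducts K] [HasPullbacks K]
    (F : K ⥤ K) (R : K ⥤ K) (adj : F ⊣ R) (O : K) :
    HasBinaryProducts (FMealy F O) ∧
    ∃ (dInfty : F.obj (∏ᶜ fun n : ℕ => iterObj R O (n + 1)) ⟶ ∏ᶜ fun n : ℕ => iterObj R O (n + 1))
      (sInfty : F.obj (∏ᶜ fun n : ℕ => iterObj R O (n + 1)) ⟶ O)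
      (hT : IsTerminal (FMealy.mk (∏ᶜ fun n : ℕ => iterObj R O (n + 1)) dInfty sInfty)),
      ∀ M N : FMealy F O,
        ∃ (P : FMealy F O) (p₁ : P ⟶ M) (p₂ : P ⟶ N),
          Nonempty (IsLimit (BinaryFan.mk p₁ p₂)) ∧
          Nonempty (P.E ≅ pullback (FMealy.Hom.f (hT.from M)) (FMealy.Hom.f (hT.from N))) := by
  have hT : IsTerminal (FMealyAux.termM adj O (F := F)) := FMealyAux.termMIsTerminal adj (O := O)
  constructor
  · haveI : ∀ {X Y : FMealy F O}, HasLimit (pair X Y) := fun {X Y} =>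
      HasLimit.mk ⟨_, FMealyAux.prodIsLimit hT X Y⟩
    exact hasBinaryProducts_of_hasLimit_pair _
  · refine ⟨FMealyAux.dInf adj O, FMealyAux.sInfM adj O, hT, fun M N => ?_⟩
    exact ⟨FMealyAux.prodM hT M N, FMealyAux.prodFst hT M N, FMealyAux.prodSnd hT M N,
      ⟨FMealyAux.prodIsLimit hT M N⟩, ⟨Iso.refl _⟩⟩
end

section
/- Let K be a category with countable products and pullbacks, F : K ⥤ K an endofunctor with a right adjoint R, and O an object of K. Then the category F-Mre of F-Moore machines with output O has all finite products (in particular a terminal object and binary products). -/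
open CategoryTheory Limits

universe w w' v u

section Aux

namespace FMooreAux

open FMoore

variable {K : Type u} [Category.{v} K] [HasCountableProducts K] [HasPullbacks K]
variable {F R : K ⥤ K} (adj : F ⊣ R) {O : K}

/-- Transposed structure map of a machine. -/
noncomputable def tr (M : FMoore F O) : M.E ⟶ R.obj M.E := adj.homEquiv _ _ M.d

lemma hd_iff (M N : FMoore F O) (f : M.E ⟶ N.E) :
    M.d ≫ f = F.map f ≫ N.d ↔ tr adj M ≫ R.map f = f ≫ tr adj N := by
  unfold tr
  rw [← Adjunction.homEquiv_naturality_right, ← Adjunction.homEquiv_naturality_left]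
  exact ⟨fun h => congrArg _ h, fun h => (adj.homEquiv _ _).injective h⟩

lemma tr_hom {M N : FMoore F O} (u : FMoore.Hom M N) :
    tr adj M ≫ R.map u.f = u.f ≫ tr adj N :=
  (hd_iff adj M N u.f).mp u.hd

lemma comp_f {M N P : FMoore F O} (u : M ⟶ N) (v : N ⟶ P) :
    (u ≫ v).f = u.f ≫ v.f := rfl

/-- Iterates of `R` on `O`. -/
def pow (R : K ⥤ K) (O : K) : ℕ → K
  | 0 => O
  | n + 1 => R.obj (pow R O n)

variable (O) in
/-- `R (∏ₙ Rⁿ O)` is a product of the `Rⁿ⁺¹ O`. -/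
noncomputable def hRE :
    IsLimit (Fan.mk (R.obj (∏ᶜ pow R O)) (fun n => R.map (Pi.π (pow R O) n))) :=
  haveI : PreservesLimitsOfSize.{0, 0} R := adj.rightAdjoint_preservesLimits
  isLimitFanMkObjOfIsLimit R _ _ (productIsProduct _)

variable (O) in
/-- The transposed structure map of the terminal machine. -/
noncomputable def ehat : (∏ᶜ pow R O) ⟶ R.obj (∏ᶜ pow R O) :=
  (hRE adj O).lift (Fan.mk _ (fun n => (Pi.π (pow R O) (n + 1) : (∏ᶜ pow R O) ⟶ R.obj (pow R O n))))

lemma ehat_π (n : ℕ) :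
    ehat adj O ≫ R.map (Pi.π (pow R O) n) = Pi.π (pow R O) (n + 1) := by
  exact (hRE adj O).fac
    (Fan.mk _ (fun n => (Pi.π (pow R O) (n + 1) : (∏ᶜ pow R O) ⟶ R.obj (pow R O n)))) ⟨n⟩

variable (O) in
/-- The terminal machine. -/
@[reducible]
noncomputable def T : FMoore F O where
  E := ∏ᶜ pow R O
  d := (adj.homEquiv _ _).symm (ehat adj O)
  s := Pi.π (pow R O) 0

lemma tr_T : tr adj (T adj O) = ehat adj O := by
  exact (adj.homEquiv _ _).apply_symm_apply (ehat adj O)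

/-- Components of the unique map to the terminal machine. -/
noncomputable def toFun (M : FMoore F O) : ∀ n, M.E ⟶ pow R O n
  | 0 => M.s
  | n + 1 => tr adj M ≫ R.map (toFun M n)

/-- The unique machine morphism to the terminal machine. -/
noncomputable def toT (M : FMoore F O) : FMoore.Hom M (T adj O) where
  f := Pi.lift (toFun adj M)
  hd := by
    refine (hd_iff adj M (T adj O) _).mpr ?_
    rw [tr_T]
    refine (hRE adj O).hom_ext fun ⟨n⟩ => ?_
    simp only [Fan.mk_π_app, Category.assoc]
    rw [ehat_π, ← R.map_comp]
    simp [toFun]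
    exact (Pi.lift_π (toFun adj M) (n + 1)).symm
  hs := by simp [T, toFun]; exact (Pi.lift_π (toFun adj M) 0).symm

lemma toT_f_π (M : FMoore F O) (n : ℕ) :
    (toT adj M).f ≫ Pi.π (pow R O) n = toFun adj M n := by simp [toT]

lemma toT_unique (M : FMoore F O) (g : FMoore.Hom M (T adj O)) :
    g.f = (toT adj M).f := by
  have hg : g.f ≫ tr adj (T adj O) = tr adj M ≫ R.map g.f := (tr_hom adj g).symm
  refine Pi.hom_ext _ _ fun n => ?_
  refine Eq.trans ?_ (toT_f_π adj M n).symm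
  induction n with
  | zero => exact g.hs.symm
  | succ n ih =>
      rw [← ehat_π adj n, ← tr_T adj]
      show g.f ≫ tr adj (T adj O) ≫ R.map (Pi.π (pow R O) n) = tr adj M ≫ R.map (toFun adj M n)
      rw [← Category.assoc, hg, Category.assoc, ← R.map_comp, ih]

noncomputable def isTerminalT : IsTerminal (T adj O) :=
  IsTerminal.ofUniqueHom (fun M => toT adj M)
    (fun M m => FMoore.Hom.ext ((toT_unique adj M m).trans rfl))

section Prod

variable (M N : FMoore F O)

/-- The pullback of the canonical maps to the terminal machine, which R preserves. -/
noncomputable def hRP :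
    IsLimit (PullbackCone.mk (R.map (pullback.fst (toT adj M).f (toT adj N).f))
      (R.map (pullback.snd (toT adj M).f (toT adj N).f))
      (by rw [← R.map_comp, ← R.map_comp, pullback.condition])) :=
  haveI : PreservesLimitsOfSize.{0, 0} R := adj.rightAdjoint_preservesLimits
  isLimitPullbackConeMapOfIsLimit R pullback.condition (pullbackIsPullback _ _)

lemma psi_w :
    (pullback.fst (toT adj M).f (toT adj N).f ≫ tr adj M) ≫ R.map (toT adj M).f =
      (pullback.snd (toT adj M).f (toT adj N).f ≫ tr adj N) ≫ R.map (toT adj N).f := by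
  rw [Category.assoc, tr_hom adj (toT adj M), Category.assoc, tr_hom adj (toT adj N),
    ← Category.assoc, ← Category.assoc, pullback.condition]

/-- Transposed structure map of the product machine. -/
noncomputable def psi :
    pullback (toT adj M).f (toT adj N).f ⟶ R.obj (pullback (toT adj M).f (toT adj N).f) :=
  PullbackCone.IsLimit.lift (hRP adj M N) _ _ (psi_w adj M N)

lemma psi_fst : psi adj M N ≫ R.map (pullback.fst (toT adj M).f (toT adj N).f) =
    pullback.fst (toT adj M).f (toT adj N).f ≫ tr adj M :=
  PullbackCone.IsLimit.lift_fst (hRP adj M N) _ _ (psi_w adj M N)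

lemma psi_snd : psi adj M N ≫ R.map (pullback.snd (toT adj M).f (toT adj N).f) =
    pullback.snd (toT adj M).f (toT adj N).f ≫ tr adj N :=
  PullbackCone.IsLimit.lift_snd (hRP adj M N) _ _ (psi_w adj M N)

/-- The product machine. -/
@[reducible]
noncomputable def Pm : FMoore F O where
  E := pullback (toT adj M).f (toT adj N).f
  d := (adj.homEquiv _ _).symm (psi adj M N)
  s := pullback.fst (toT adj M).f (toT adj N).f ≫ M.s

lemma tr_Pm : tr adj (Pm adj M N) = psi adj M N := by
  exact (adj.homEquiv _ _).apply_symm_apply (psi adj M N)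

noncomputable def proj1 : FMoore.Hom (Pm adj M N) M where
  f := pullback.fst (toT adj M).f (toT adj N).f
  hd := by refine (hd_iff adj (Pm adj M N) _ _).mpr ?_; rw [tr_Pm]; exact psi_fst adj M N
  hs := rfl

noncomputable def proj2 : FMoore.Hom (Pm adj M N) N where
  f := pullback.snd (toT adj M).f (toT adj N).f
  hd := by refine (hd_iff adj (Pm adj M N) _ _).mpr ?_; rw [tr_Pm]; exact psi_snd adj M N
  hs := by
    show pullback.fst (toT adj M).f (toT adj N).f ≫ M.s = _
    rw [(toT adj M).hs, (toT adj N).hs, ← Category.assoc]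
    rw [pullback.condition]; exact Category.assoc _ _ _

variable {M N} in
lemma lift_w {Q : FMoore F O} (u : FMoore.Hom Q M) (v : FMoore.Hom Q N) :
    u.f ≫ (toT adj M).f = v.f ≫ (toT adj N).f := by
  have h1 := toT_unique adj Q ((show Q ⟶ M from u) ≫ (show M ⟶ T adj O from toT adj M))
  have h2 := toT_unique adj Q ((show Q ⟶ N from v) ≫ (show N ⟶ T adj O from toT adj N))
  exact h1.trans h2.symm

variable {M N} in
/-- The lift into the product machine. -/
noncomputable def liftHom {Q : FMoore F O} (u : FMoore.Hom Q M) (v : FMoore.Hom Q N) :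
    FMoore.Hom Q (Pm adj M N) where
  f := pullback.lift u.f v.f (lift_w adj u v)
  hd := by
    refine (hd_iff adj Q (Pm adj M N) _).mpr ?_
    rw [tr_Pm]
    refine PullbackCone.IsLimit.hom_ext (hRP adj M N) ?_ ?_
    · simp only [PullbackCone.mk_fst, Category.assoc]
      show (tr adj Q ≫ R.map (pullback.lift u.f v.f (lift_w adj u v))) ≫
          R.map (pullback.fst (toT adj M).f (toT adj N).f) =
        (pullback.lift u.f v.f (lift_w adj u v) ≫ psi adj M N) ≫
          R.map (pullback.fst (toT adj M).f (toT adj N).f)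
      rw [Category.assoc, Category.assoc]
      rw [psi_fst, ← R.map_comp, pullback.lift_fst, ← Category.assoc, pullback.lift_fst,
        tr_hom adj u]
    · simp only [PullbackCone.mk_snd, Category.assoc]
      show (tr adj Q ≫ R.map (pullback.lift u.f v.f (lift_w adj u v))) ≫
          R.map (pullback.snd (toT adj M).f (toT adj N).f) =
        (pullback.lift u.f v.f (lift_w adj u v) ≫ psi adj M N) ≫
          R.map (pullback.snd (toT adj M).f (toT adj N).f)
      rw [Category.assoc, Category.assoc]
      rw [psi_snd, ← R.map_comp, pullback.lift_snd, ← Category.assoc, pullback.lift_snd,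
        tr_hom adj v]
  hs := by
    show Q.s = _ ≫ pullback.fst (toT adj M).f (toT adj N).f ≫ M.s
    rw [← Category.assoc, pullback.lift_fst, ← u.hs]

/-- The product machine is a binary product. -/
noncomputable def isLimitPm :
    IsLimit (BinaryFan.mk (P := Pm adj M N) (show Pm adj M N ⟶ M from proj1 adj M N)
      (show Pm adj M N ⟶ N from proj2 adj M N)) := by
  refine BinaryFan.isLimitMk
    (fun s => liftHom adj (show FMoore.Hom s.pt M from s.fst) (show FMoore.Hom s.pt N from s.snd))
    (fun s => FMoore.Hom.ext ?_) (fun s => FMoore.Hom.ext ?_) (fun s m h1 h2 => FMoore.Hom.ext ?_)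
  · exact pullback.lift_fst _ _ _
  · exact pullback.lift_snd _ _ _
  · dsimp only [liftHom]
    refine pullback.hom_ext ?_ ?_
    · rw [pullback.lift_fst]; exact congrArg FMoore.Hom.f h1
    · rw [pullback.lift_snd]; exact congrArg FMoore.Hom.f h2

end Prod

end FMooreAux

end Aux

/-- If `K` has countable products and pullbacks and `F ⊣ R`, then the category of
`F`-Moore machines with output `O` has all finite products. -/
theorem fMoore_hasFiniteProducts
    {K : Type u} [Category.{v} K] [HasCountableProducts K] [HasPullbacks K]
    (F : K ⥤ K) (R : K ⥤ K) (adj : F ⊣ R) (O : K) :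
    HasFiniteProducts (FMoore F O) := by
  haveI : HasTerminal (FMoore F O) := (FMooreAux.isTerminalT adj (O := O)).hasTerminal
  haveI : ∀ {X Y : FMoore F O}, HasLimit (pair X Y) := fun {X Y} =>
    HasLimit.mk ⟨_, FMooreAux.isLimitPm adj X Y⟩
  haveI : HasBinaryProducts (FMoore F O) := hasBinaryProducts_of_hasLimit_pair _
  exact hasFiniteProducts_of_has_binary_and_terminal
end

section
/- Let K be a category with countable products, F : K ⥤ K an endofunctor with a right adjoint R, and O an object of K; let (O_∞, d_∞, s_∞) be the terminal F-Moore machine with output O (carrier O_∞ = ∏_{n ≥ 0} Rⁿ(O)). Assume moreover that F is an input process, i.e. the forgetful functor U : Alg(F) ⥤ K has a left adjoint G. Then there is a chain of two composable adjunctions G̃ ⊣ Ũ between K/O_∞ and Alg(F)/(O_∞, d_∞) (the local adjunction on slices induced by G ⊣ U) and L ⊣ B between Alg(F)/(O_∞, d_∞) and F-Mre (where B sends a machine to the unique algebra morphism into (O_∞,d_∞)); in particular the composite functors give an adjunction L ∘ G̃ ⊣ Ũ ∘ B between K/O_∞ and F-Mre. -/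
open CategoryTheory Limits

universe w w' v u

namespace FMoore

variable {K : Type u} [Category.{v} K] {F : K ⥤ K} {O : K}

/-- The underlying `F`-algebra of an `F`-Moore machine. -/
def toAlgebra (F : K ⥤ K) (O : K) : FMoore F O ⥤ Endofunctor.Algebra F where
  obj M := ⟨M.E, M.d⟩
  map {M N} u := ⟨u.f, u.hd.symm⟩

/-- The behaviour functor `B` into the slice of `F`-algebras over the algebra underlying
a terminal machine `T`, sending a machine `M` to the unique algebra morphism underlying
the unique machine morphism `M ⟶ T`. -/
def behaviour {F : K ⥤ K} {O : K} (T : FMoore F O) (hT : IsTerminal T) :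
    FMoore F O ⥤ Over ((toAlgebra F O).obj T) where
  obj M := Over.mk ((toAlgebra F O).map (hT.from M))
  map {M N} u := Over.homMk ((toAlgebra F O).map u) (by
    show (toAlgebra F O).map u ≫ (toAlgebra F O).map (hT.from N) = (toAlgebra F O).map (hT.from M)
    rw [← Functor.map_comp]
    congr 1
    exact hT.hom_ext _ _)
  map_id M := by
    ext
    exact congrArg Endofunctor.Algebra.Hom.f ((toAlgebra F O).map_id M)
  map_comp u v := by
    ext
    exact congrArg Endofunctor.Algebra.Hom.f ((toAlgebra F O).map_comp u v)

end FMoore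

/-- Given an adjunction `G ⊣ U` and an object `A`, the functor `K/U(A) ⥤ H/A` sending
an object `g : Y ⟶ U(A)` of the slice to its adjunct transpose `G(Y) ⟶ A`. -/
def sliceTranspose {K : Type u} [Category.{v} K] {H : Type u'} [Category.{v'} H]
    (G : K ⥤ H) (U : H ⥤ K) (adj : G ⊣ U) (A : H) :
    Over (U.obj A) ⥤ Over A where
  obj g := Over.mk ((adj.homEquiv g.left A).symm g.hom)
  map {g g'} h := Over.homMk (G.map h.left) (by
    show G.map h.left ≫ (adj.homEquiv g'.left A).symm g'.hom = (adj.homEquiv g.left A).symm g.hom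
    rw [Adjunction.homEquiv_counit, Adjunction.homEquiv_counit, ← Category.assoc,
      ← G.map_comp, Over.w h])

section Aux

universe v' u' v₂ u₂

/-- The adjunction `sliceTranspose G U adj A ⊣ Over.post U`. -/
def sliceTransposeAdj {K : Type u} [Category.{v} K] {H : Type u'} [Category.{v'} H]
    (G : K ⥤ H) (U : H ⥤ K) (adj : G ⊣ U) (A : H) :
    sliceTranspose G U adj A ⊣ Over.post U :=
  Adjunction.mkOfHomEquiv
    { homEquiv := fun g X =>
        { toFun := fun k => Over.homMk (adj.homEquiv g.left X.left k.left) (by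
            have hk : k.left ≫ X.hom = (adj.homEquiv g.left A).symm g.hom := Over.w k
            show adj.homEquiv g.left X.left k.left ≫ U.map X.hom = g.hom
            exact (adj.homEquiv_naturality_right k.left X.hom).symm.trans
              ((congrArg (adj.homEquiv g.left A) hk).trans ((adj.homEquiv g.left A).apply_symm_apply g.hom)))
          invFun := fun m => Over.homMk ((adj.homEquiv g.left X.left).symm m.left) (by
            have hm : m.left ≫ U.map X.hom = g.hom := Over.w m
            show (adj.homEquiv g.left X.left).symm m.left ≫ X.hom =
              (adj.homEquiv g.left A).symm g.hom
            exact (adj.homEquiv_naturality_right_symm m.left X.hom).symm.trans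
              (congrArg (adj.homEquiv g.left A).symm hm))
          left_inv := fun k => by
            ext
            exact (adj.homEquiv g.left X.left).symm_apply_apply k.left
          right_inv := fun m => by
            ext
            exact (adj.homEquiv g.left X.left).apply_symm_apply m.left }
      homEquiv_naturality_left_symm := fun {g g' X} p m => by
        ext
        exact adj.homEquiv_naturality_left_symm p.left m.left
      homEquiv_naturality_right := fun {g X X'} k p => by
        ext
        exact adj.homEquiv_naturality_right k.left p.left }

variable {K : Type u} [Category.{v} K] {F : K ⥤ K} {O : K}

@[simp] lemma FMoore.comp_f_s13 {M N P : FMoore F O} (u : M ⟶ N) (v : N ⟶ P) :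
    (u ≫ v).f = u.f ≫ v.f := rfl

@[simp] lemma FMoore.id_f_s13 (M : FMoore F O) : (𝟙 M : M ⟶ M).f = 𝟙 M.E := rfl

/-- The inverse of the behaviour functor. -/
def behaviourInv (T : FMoore F O) :
    Over ((FMoore.toAlgebra F O).obj T) ⥤ FMoore F O where
  obj X := ⟨X.left.a, X.left.str, X.hom.f ≫ T.s⟩
  map {X Y} h := ⟨h.left.f, h.left.h.symm, by
    have : h.left.f ≫ Y.hom.f = X.hom.f :=
      congrArg CategoryTheory.Endofunctor.Algebra.Hom.f (Over.w h)
    exact (congrArg (fun x => x ≫ T.s) this).symm.trans (Category.assoc _ _ _)⟩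
  map_id X := FMoore.Hom.ext rfl
  map_comp u v := FMoore.Hom.ext rfl

lemma behaviour_hom_eq (T : FMoore F O) (hT : IsTerminal T)
    (X : Over ((FMoore.toAlgebra F O).obj T)) :
    (FMoore.toAlgebra F O).map (hT.from ((behaviourInv T).obj X)) = X.hom := by
  have h := hT.hom_ext (hT.from ((behaviourInv T).obj X))
    (⟨X.hom.f, X.hom.h.symm, rfl⟩ : (behaviourInv T).obj X ⟶ T)
  apply CategoryTheory.Endofunctor.Algebra.Hom.ext
  exact congrArg FMoore.Hom.f h

/-- The equivalence between `Over ((toAlgebra F O).obj T)` and `FMoore F O`. -/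
def behaviourEquiv (T : FMoore F O) (hT : IsTerminal T) :
    Over ((FMoore.toAlgebra F O).obj T) ≌ FMoore F O where
  functor := behaviourInv T
  inverse := FMoore.behaviour T hT
  unitIso := NatIso.ofComponents
    (fun X => Over.isoMk (Iso.refl _) (by
      simp [behaviour_hom_eq T hT X, FMoore.behaviour]
      exact Category.id_comp _))
    (fun {X Y} h => by
      ext
      simp [FMoore.behaviour, behaviourInv, FMoore.toAlgebra]
      exact (Category.comp_id h.left.f).trans (Category.id_comp h.left.f).symm)
  counitIso := NatIso.ofComponents
    (fun M => { hom := ⟨𝟙 M.E, by simp [behaviourInv, FMoore.behaviour, FMoore.toAlgebra]; exact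
                    (Category.comp_id M.d).trans ((Category.id_comp M.d).symm.trans
                      (congrArg (fun x => x ≫ M.d) (F.map_id M.E).symm)), by
                  show (hT.from M).f ≫ T.s = 𝟙 M.E ≫ M.s
                  rw [Category.id_comp, ← (hT.from M).hs]⟩
                inv := ⟨𝟙 M.E, by simp [behaviourInv, FMoore.behaviour, FMoore.toAlgebra]; rfl, by
                  show M.s = 𝟙 M.E ≫ ((hT.from M).f ≫ T.s)
                  rw [Category.id_comp, (hT.from M).hs]⟩
                hom_inv_id := FMoore.Hom.ext (by
                  simp [behaviourInv, FMoore.behaviour, FMoore.toAlgebra]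
                  rfl)
                inv_hom_id := FMoore.Hom.ext (by simp; exact Category.id_comp _) })
    (fun {M N} u => FMoore.Hom.ext (by
      show ((FMoore.behaviour T hT ⋙ behaviourInv T).map u).f ≫ 𝟙 N.E = 𝟙 M.E ≫ u.f
      simp [FMoore.behaviour, behaviourInv, FMoore.toAlgebra]
      exact Category.comp_id _))
  functor_unitIso_comp X := FMoore.Hom.ext (by
    simp [behaviourInv, FMoore.behaviour, FMoore.toAlgebra]
    rfl)

end Aux

/-- If `F` is an input process (the forgetful functor `U : Alg(F) ⥤ K` has a left
adjoint `G`) and `(O_∞, d_∞, s_∞)` is the terminal `F`-Moore machine (with carrier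
`O_∞ = ∏_{n ≥ 0} Rⁿ O`), then there is a chain of two adjunctions
`G̃ ⊣ Ũ` between `K/O_∞` and `Alg(F)/(O_∞, d_∞)` and `L ⊣ B` between
`Alg(F)/(O_∞, d_∞)` and `F-Mre`; in particular the composites form an adjunction
`L ∘ G̃ ⊣ Ũ ∘ B` between `K/O_∞` and `F-Mre`. -/
theorem fMoore_behaviour_adjunction_chain
    {K : Type u} [Category.{v} K] [HasCountableProducts K]
    (F : K ⥤ K) (R : K ⥤ K) (adj : F ⊣ R) (O : K)
    (G : K ⥤ Endofunctor.Algebra F) (adjGU : G ⊣ Endofunctor.Algebra.forget F)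
    (dInfty : F.obj (∏ᶜ fun n : ℕ => iterObj R O n) ⟶ ∏ᶜ fun n : ℕ => iterObj R O n)
    (sInfty : (∏ᶜ fun n : ℕ => iterObj R O n) ⟶ O)
    (hT : IsTerminal (FMoore.mk (∏ᶜ fun n : ℕ => iterObj R O n) dInfty sInfty)) :
    ∃ (_ : sliceTranspose G (Endofunctor.Algebra.forget F) adjGU
            ((FMoore.toAlgebra F O).obj (FMoore.mk (∏ᶜ fun n : ℕ => iterObj R O n) dInfty sInfty)) ⊣
          Over.post (Endofunctor.Algebra.forget F))
      (L : Over ((FMoore.toAlgebra F O).obj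
            (FMoore.mk (∏ᶜ fun n : ℕ => iterObj R O n) dInfty sInfty)) ⥤ FMoore F O)
      (_ : L ⊣ FMoore.behaviour _ hT),
      Nonempty ((sliceTranspose G (Endofunctor.Algebra.forget F) adjGU
            ((FMoore.toAlgebra F O).obj (FMoore.mk (∏ᶜ fun n : ℕ => iterObj R O n) dInfty sInfty)) ⋙ L) ⊣
          (FMoore.behaviour _ hT ⋙ Over.post (Endofunctor.Algebra.forget F))) := by
  refine ⟨sliceTransposeAdj G (Endofunctor.Algebra.forget F) adjGU _,
    (behaviourEquiv _ hT).functor, (behaviourEquiv _ hT).toAdjunction,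
    ⟨(sliceTransposeAdj G (Endofunctor.Algebra.forget F) adjGU _).comp
      (behaviourEquiv _ hT).toAdjunction⟩⟩
end

section
/- Let K be a category with countable products, F : K ⥤ K an endofunctor with right adjoint R, and O an object of K. Then the object O_∞ = ∏_{n ≥ 1} Rⁿ(O) carries a coalgebra structure for the endofunctor A ↦ R(O) ⨯ R(A) of K (using binary products in K) which makes it the terminal coalgebra of this endofunctor: O_∞ equipped with the structure map ⟨π₁, ρ⟩, where π₁ : O_∞ ⟶ R(O) is the projection on the first factor and ρ : O_∞ ⟶ R(O_∞) is the canonical map induced (via product preservation of R) by the projections πₙ₊₁ : O_∞ ⟶ Rⁿ⁺¹(O) for n ≥ 1, is a terminal object in the category of coalgebras of the endofunctor A ↦ R(O) ⨯ R(A). -/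
open CategoryTheory Limits

universe v u

/-- Auxiliary: the components of the canonical map from a coalgebra carrier. -/
def coalgComponents {K : Type u} [Category.{v} K] (R : K ⥤ K) (O : K) {A : K}
    (c₁ : A ⟶ R.obj O) (c₂ : A ⟶ R.obj A) : ∀ n : ℕ, A ⟶ iterObj R O (n + 1)
  | 0 => c₁
  | n + 1 => c₂ ≫ R.map (coalgComponents R O c₁ c₂ n)

/-- If `K` has countable products and `F ⊣ R`, then `O_∞ = ∏_{n ≥ 1} Rⁿ O`, equipped
with the coalgebra structure `⟨π₁, ρ⟩` — where `π₁` is the projection onto the first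
factor `R O` and `ρ : O_∞ ⟶ R O_∞` is the canonical map induced, via product
preservation of the right adjoint `R`, by the projections `π_{n+1} : O_∞ ⟶ Rⁿ⁺¹ O` —
is a terminal object in the category of coalgebras for the endofunctor
`A ↦ R O ⨯ R A`. -/
theorem prod_iter_isTerminal_coalgebra_mealy
    {K : Type u} [Category.{v} K] [HasCountableProducts K]
    (F : K ⥤ K) (R : K ⥤ K) (adj : F ⊣ R) (O : K) :
    ∃ ρ : (∏ᶜ fun n : ℕ => iterObj R O (n + 1)) ⟶ R.obj (∏ᶜ fun n : ℕ => iterObj R O (n + 1)),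
      (∀ n : ℕ, ρ ≫ R.map (Pi.π (fun k : ℕ => iterObj R O (k + 1)) n) =
          Pi.π (fun k : ℕ => iterObj R O (k + 1)) (n + 1)) ∧
      Nonempty (IsTerminal (C := Endofunctor.Coalgebra (R ⋙ prod.functor.obj (R.obj O)))
        ⟨∏ᶜ fun n : ℕ => iterObj R O (n + 1),
          prod.lift (Pi.π (fun k : ℕ => iterObj R O (k + 1)) 0) ρ⟩) := by
  haveI : PreservesLimitsOfSize.{0, 0} R := adj.rightAdjoint_preservesLimits
  set f : ℕ → K := fun k : ℕ => iterObj R O (k + 1) with hf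
  set P : K := ∏ᶜ f with hP
  -- `R.obj (f n) = f (n+1)` definitionally
  let ρ : P ⟶ R.obj P :=
    (Pi.lift (fun n : ℕ => (Pi.π f (n + 1) : P ⟶ R.obj (f n))) : P ⟶ ∏ᶜ fun n => R.obj (f n)) ≫
      inv (piComparison R f)
  have hcomp : ∀ n : ℕ, ρ ≫ R.map (Pi.π f n) = Pi.π f (n + 1) := by
    intro n
    rw [← piComparison_comp_π]
    show (Pi.lift _ ≫ inv (piComparison R f)) ≫ _ ≫ _ = _
    rw [Category.assoc, IsIso.inv_hom_id_assoc, limit.lift_π]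
    rfl
  refine ⟨ρ, hcomp, ⟨?_⟩⟩
  have hhom : ∀ (V : Endofunctor.Coalgebra (R ⋙ prod.functor.obj (R.obj O))),
      V.str ≫ (R ⋙ prod.functor.obj (R.obj O)).map
          (Pi.lift (coalgComponents R O (V.str ≫ prod.fst) (V.str ≫ prod.snd))) =
        Pi.lift (coalgComponents R O (V.str ≫ prod.fst) (V.str ≫ prod.snd)) ≫
          prod.lift (Pi.π f 0) ρ := by
    intro V
    set c₁ : V.V ⟶ R.obj O := V.str ≫ prod.fst with hc₁
    set c₂ : V.V ⟶ R.obj V.V := V.str ≫ prod.snd with hc₂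
    set g : V.V ⟶ P := Pi.lift (coalgComponents R O c₁ c₂) with hg
    have hgn : ∀ n, g ≫ Pi.π f n = coalgComponents R O c₁ c₂ n := fun n => limit.lift_π _ _
    have key : g ≫ ρ = c₂ ≫ R.map g := by
      rw [← cancel_mono (piComparison R f)]
      apply limit.hom_ext
      rintro ⟨n⟩
      simp only [Category.assoc, piComparison_comp_π, limit.lift_π]
      rw [hcomp n, ← R.map_comp, hgn n]
      exact hgn (n + 1)
    show V.str ≫ prod.map (𝟙 _) (R.map g) = g ≫ prod.lift (Pi.π f 0) ρ
    apply Limits.prod.hom_ext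
    · exact ((Category.assoc _ _ _).trans
        (congrArg (V.str ≫ ·) ((prod.map_fst _ _).trans (Category.comp_id _)))).trans
        ((Category.assoc _ _ _).trans ((congrArg (g ≫ ·) (prod.lift_fst (Pi.π f 0) ρ)).trans (hgn 0))).symm
    · exact ((Category.assoc _ _ _).trans
        ((congrArg (V.str ≫ ·) (prod.map_snd _ _)).trans (Category.assoc _ _ _).symm)).trans
        (key.symm.trans ((Category.assoc _ _ _).trans (congrArg (g ≫ ·) (prod.lift_snd (Pi.π f 0) ρ))).symm)
  refine IsTerminal.ofUniqueHom (fun V => ⟨_, hhom V⟩) ?_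
  · -- uniqueness
    intro V m
    set c₁ : V.V ⟶ R.obj O := V.str ≫ prod.fst with hc₁
    set c₂ : V.V ⟶ R.obj V.V := V.str ≫ prod.snd with hc₂
    have hm := m.h
    have hm1 : m.f ≫ Pi.π f 0 = c₁ := by
      have := congrArg (· ≫ (prod.fst : R.obj O ⨯ R.obj P ⟶ R.obj O)) hm
      exact ((Category.assoc _ _ _).trans (congrArg (m.f ≫ ·) (prod.lift_fst (Pi.π f 0) ρ))).symm.trans
        (this.symm.trans ((Category.assoc _ _ _).trans
          (congrArg (V.str ≫ ·) ((prod.map_fst _ _).trans (Category.comp_id _)))))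
    have hm2 : m.f ≫ ρ = c₂ ≫ R.map m.f := by
      have := congrArg (· ≫ (prod.snd : R.obj O ⨯ R.obj P ⟶ R.obj P)) hm
      exact ((Category.assoc _ _ _).trans (congrArg (m.f ≫ ·) (prod.lift_snd (Pi.π f 0) ρ))).symm.trans
        (this.symm.trans ((Category.assoc _ _ _).trans
          ((congrArg (V.str ≫ ·) (prod.map_snd _ _)).trans (Category.assoc _ _ _).symm)))
    have hall : ∀ n, m.f ≫ Pi.π f n = coalgComponents R O c₁ c₂ n := by
      intro n
      induction n with
      | zero => exact hm1
      | succ n ih =>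
        exact ((congrArg (m.f ≫ ·) (hcomp n)).symm.trans (Category.assoc _ _ _).symm).trans
          ((congrArg (· ≫ R.map (Pi.π f n)) hm2).trans ((Category.assoc _ _ _).trans
            ((congrArg (c₂ ≫ ·) (R.map_comp _ _).symm).trans (congrArg (fun x => c₂ ≫ R.map x) ih))))
    ext1
    apply limit.hom_ext
    rintro ⟨n⟩
    rw [limit.lift_π]
    exact hall n
end

section
/- Let I and O be sets (types). The category of Mealy machines in Set with input I and output O — objects are triples (E, d : E × I → E, s : E × I → O), morphisms f : (E,d,s) → (T,d',s') are functions f : E → T with f(d(e,i)) = d'(f(e), i) and s(e,i) = s'(f(e), i) — has a terminal object whose carrier is the set of functions from nonempty finite lists over I to O (i.e., the function space [I⁺, O] where I⁺ is the free semigroup on I). -/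
open CategoryTheory Limits

universe u

/-- A Mealy machine in `Set` with input `I` and output `O`: a carrier type `E` with a
transition function `d : E × I → E` and an output function `s : E × I → O`. -/
structure MealySet (I O : Type u) : Type (u + 1) where
  E : Type u
  d : E × I → E
  s : E × I → O

namespace MealySet

variable {I O : Type u}

/-- A morphism of Mealy machines in `Set`. -/
@[ext]
structure Hom (M N : MealySet I O) : Type u where
  f : M.E → N.E
  hd : ∀ e i, f (M.d (e, i)) = N.d (f e, i)
  hs : ∀ e i, M.s (e, i) = N.s (f e, i)

instance : Category (MealySet I O) where
  Hom := Hom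
  id M := ⟨id, fun _ _ => rfl, fun _ _ => rfl⟩
  comp u v := ⟨v.f ∘ u.f, fun e i => by simp [u.hd, v.hd], fun e i => by simp [u.hs, v.hs]⟩
  id_comp u := Hom.ext rfl
  comp_id u := Hom.ext rfl
  assoc u v w := Hom.ext rfl

end MealySet

/-- Run a Mealy machine from state `e` on the nonempty word `i :: l`, returning the
final output. -/
def mealyRun {I O : Type u} (M : MealySet I O) (e : M.E) : List I → I → O
  | [], i => M.s (e, i)
  | j :: l, i => mealyRun M (M.d (e, i)) l j

/-- The category of Mealy machines in `Set` with input `I` and output `O` has a terminal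
object whose carrier is the function space of functions from nonempty lists over `I`
(realized as pairs `I × List I`, the free semigroup `I⁺` on `I`) to `O`. -/
theorem mealySet_isTerminal_funsOnNonemptyLists (I O : Type u) :
    ∃ (d : ((I × List I → O) × I) → (I × List I → O)) (s : ((I × List I → O) × I) → O),
      Nonempty (IsTerminal (MealySet.mk (I × List I → O) d s)) := by
  refine ⟨fun p w => p.1 (p.2, w.1 :: w.2), fun p => p.1 (p.2, []), ⟨?_⟩⟩
  apply IsTerminal.ofUniqueHom (h := fun M =>
    MealySet.Hom.mk (fun e w => mealyRun M e w.2 w.1) (fun e i => rfl) (fun e i => rfl))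
  intro M m
  apply MealySet.Hom.ext
  funext e w
  obtain ⟨i, l⟩ := w
  induction l generalizing e i with
  | nil => exact (m.hs e i).symm
  | cons j l ih =>
    have h1 := congrFun (m.hd e i) (j, l)
    simp only [MealySet.Hom.f] at h1 ⊢
    rw [← h1, ih (M.d (e, i)) j]
    rfl
end
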